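/- Let j > 0, let v denote the two-term sequence (0, −1), and let t be either the sequence (−1) v^{j-1} or the sequence v^{j-1} (0), both of which have length 2j−1 and values in {−1, 0}. Then the orbit of t under the generalized torsion map t ↦ C_{-1,0}(−1, t) on {−1, 0}^{2j-1} has length exactly 2^j. -/

import Mathlib

/-- Prepend a term to a list of length `k`, giving a list of length `k + 1`. -/
def gtCons (a : ℤ) {k : ℕ} (y : {l : List ℤ // l.length = k}) :
    {l : List ℤ // l.length = k + 1} :=
  ⟨a :: y.1, by simp [y.2]⟩

/-- The tail of a list of length `k + 1`, as a list of length `k`. -/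
def gtTail {k : ℕ} (t : {l : List ℤ // l.length = k + 1}) : {l : List ℤ // l.length = k} :=
  ⟨t.1.tail, by simp [t.2]⟩

/-- The generalized torsion map `C_{m,n}(x, −)` on sequences of length `k`, as a
permutation, defined by induction on `k`:  `C_{m,n}(x, t₁ t') = (m + n − t₁) ·
(C_{m,n}(t₁, −))^x (t')`, where the `x`-th iterate (`x ∈ ℤ`, possibly negative) is the
`zpow` of the permutation `C_{m,n}(t₁, −)` of length-`(k-1)` sequences. -/
def gtPerm (m n : ℤ) : (k : ℕ) → ℤ → Equiv.Perm {l : List ℤ // l.length = k}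
  | 0, _ => Equiv.refl _
  | k + 1, x =>
    { toFun := fun t =>
        gtCons (m + n - t.1.headD 0) ((gtPerm m n k (t.1.headD 0) ^ x) (gtTail t))
      invFun := fun u =>
        gtCons (m + n - u.1.headD 0) ((gtPerm m n k (m + n - u.1.headD 0) ^ (-x)) (gtTail u))
      left_inv := by
        rintro ⟨l, hl⟩
        obtain ⟨a, l', rfl⟩ : ∃ a l', l = a :: l' := by
          cases l with
          | nil => simp at hl
          | cons a l' => exact ⟨a, l', rfl⟩
        simp only [gtCons, gtTail, List.headD_cons, List.tail_cons, sub_sub_cancel,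
          Subtype.coe_eta, ← Equiv.Perm.mul_apply, ← zpow_add, neg_add_cancel, zpow_zero,
          Equiv.Perm.coe_one, id_eq]
      right_inv := by
        rintro ⟨l, hl⟩
        obtain ⟨a, l', rfl⟩ : ∃ a l', l = a :: l' := by
          cases l with
          | nil => simp at hl
          | cons a l' => exact ⟨a, l', rfl⟩
        simp only [gtCons, gtTail, List.headD_cons, List.tail_cons, sub_sub_cancel,
          Subtype.coe_eta, ← Equiv.Perm.mul_apply, ← zpow_add, add_neg_cancel, zpow_zero,
          Equiv.Perm.coe_one, id_eq] }

/-- The generalized torsion `C_{m,n}(x, t)` for arbitrary integers `m ≠ n` and `x`. -/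
def gtorsion (m n : ℤ) (x : ℤ) (t : List ℤ) : List ℤ :=
  (gtPerm m n t.length x ⟨t, rfl⟩).1

-- basic application lemmas
lemma gtPerm_cons (m n : ℤ) (k : ℕ) (x a : ℤ) (t : {l : List ℤ // l.length = k}) :
    gtPerm m n (k + 1) x (gtCons a t) = gtCons (m + n - a) ((gtPerm m n k a ^ x) t) := by
  show (gtPerm m n (k+1) x).toFun (gtCons a t) = _
  simp only [gtPerm, gtCons, gtTail, List.headD_cons, List.tail_cons, Subtype.coe_eta]

lemma gtPerm_symm_cons (m n : ℤ) (k : ℕ) (x a : ℤ) (t : {l : List ℤ // l.length = k}) :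
    (gtPerm m n (k + 1) x)⁻¹ (gtCons a t) =
      gtCons (m + n - a) ((gtPerm m n k (m + n - a) ^ (-x)) t) := by
  show (gtPerm m n (k+1) x).invFun (gtCons a t) = _
  simp only [gtPerm, gtCons, gtTail, List.headD_cons, List.tail_cons, Subtype.coe_eta]

lemma gtPerm_zero (m n x : ℤ) : gtPerm m n 0 x = Equiv.refl _ := rfl

/-- cons two elements -/
def gtCons2 (a b : ℤ) {k : ℕ} (t : {l : List ℤ // l.length = k}) :
    {l : List ℤ // l.length = k + 2} := gtCons a (gtCons b t)

-- abbreviations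
local notation "T" k => gtPerm (-1) 0 k (-1)
local notation "S" k => gtPerm (-1) 0 k 0

lemma S_cons (k : ℕ) (a : ℤ) (t : {l : List ℤ // l.length = k}) :
    (S (k+1)) (gtCons a t) = gtCons (-1 - a) t := by
  rw [gtPerm_cons]; norm_num

lemma T_len1 (a : ℤ) (t : {l : List ℤ // l.length = 0}) :
    (T 1) (gtCons a t) = gtCons (-1 - a) t := by
  rw [gtPerm_cons, gtPerm_zero]
  have : (Equiv.refl {l : List ℤ // l.length = 0}) = 1 := rfl
  rw [this, one_zpow]
  norm_num

lemma T_c00 (k : ℕ) (t : {l : List ℤ // l.length = k}) :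
    (T (k+2)) (gtCons2 0 0 t) = gtCons2 (-1) (-1) t := by
  unfold gtCons2
  rw [gtPerm_cons]
  norm_num
  rw [← Equiv.Perm.inv_def, gtPerm_symm_cons]
  norm_num

lemma T_c11 (k : ℕ) (t : {l : List ℤ // l.length = k}) :
    (T (k+2)) (gtCons2 (-1) (-1) t) = gtCons2 0 0 ((S k) t) := by
  unfold gtCons2
  rw [gtPerm_cons]
  norm_num
  rw [← Equiv.Perm.inv_def, gtPerm_symm_cons]
  norm_num

lemma T_c01 (k : ℕ) (t : {l : List ℤ // l.length = k}) :
    (T (k+2)) (gtCons2 0 (-1) t) = gtCons2 (-1) 0 t := by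
  unfold gtCons2
  rw [gtPerm_cons]
  norm_num
  rw [← Equiv.Perm.inv_def, gtPerm_symm_cons]
  norm_num

lemma T_c10 (k : ℕ) (t : {l : List ℤ // l.length = k}) :
    (T (k+2)) (gtCons2 (-1) 0 t) = gtCons2 0 (-1) ((T k) t) := by
  unfold gtCons2
  rw [gtPerm_cons]
  norm_num
  rw [← Equiv.Perm.inv_def, gtPerm_symm_cons]
  norm_num

lemma exists_cons {k : ℕ} (t : {l : List ℤ // l.length = k + 1}) :
    ∃ (a : ℤ) (t' : {l : List ℤ // l.length = k}), t = gtCons a t' := by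
  obtain ⟨l, hl⟩ := t
  cases l with
  | nil => simp at hl
  | cons a l' => exact ⟨a, ⟨l', by simpa using hl⟩, rfl⟩

lemma exists_cons2 {k : ℕ} (t : {l : List ℤ // l.length = k + 2}) :
    ∃ (a b : ℤ) (t' : {l : List ℤ // l.length = k}), t = gtCons2 a b t' := by
  obtain ⟨a, u, rfl⟩ := exists_cons t
  obtain ⟨b, t', rfl⟩ := exists_cons u
  exact ⟨a, b, t', rfl⟩

lemma S_sq (k : ℕ) : (S (k+1)) ^ 2 = 1 := by
  ext t
  obtain ⟨a, t', rfl⟩ := exists_cons t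
  rw [pow_two]
  simp only [Equiv.Perm.mul_apply, S_cons, Equiv.Perm.coe_one, id_eq]
  ring_nf

lemma S_pow_two_pow (k i : ℕ) : (S (k+1)) ^ (2 ^ (i+1)) = 1 := by
  rw [pow_succ', pow_mul, S_sq, one_pow]

-- T² on two-cons
lemma Tsq_eq (k : ℕ) (a : ℤ) (ha : a = -1 ∨ a = 0) (t : {l : List ℤ // l.length = k}) :
    ((T (k+2)) ^ 2) (gtCons2 a a t) = gtCons2 a a ((S k) t) := by
  rw [pow_two, Equiv.Perm.mul_apply]
  rcases ha with rfl | rfl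
  · rw [T_c11, T_c00]
  · rw [T_c00, T_c11]

lemma Tsq_ne (k : ℕ) (a b : ℤ) (hab : (a = 0 ∧ b = -1) ∨ (a = -1 ∧ b = 0))
    (t : {l : List ℤ // l.length = k}) :
    ((T (k+2)) ^ 2) (gtCons2 a b t) = gtCons2 a b ((T k) t) := by
  rw [pow_two, Equiv.Perm.mul_apply]
  rcases hab with ⟨rfl, rfl⟩ | ⟨rfl, rfl⟩
  · rw [T_c01, T_c10]
  · rw [T_c10, T_c01]

-- iterate a perm that commutes with cons2
lemma pow_gtCons2 {k : ℕ} (e : Equiv.Perm {l : List ℤ // l.length = k + 2})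
    (f : Equiv.Perm {l : List ℤ // l.length = k}) (a b : ℤ)
    (h : ∀ t, e (gtCons2 a b t) = gtCons2 a b (f t)) (N : ℕ)
    (t : {l : List ℤ // l.length = k}) :
    (e ^ N) (gtCons2 a b t) = gtCons2 a b ((f ^ N) t) := by
  induction N with
  | zero => simp
  | succ N ih =>
    rw [pow_succ', pow_succ', Equiv.Perm.mul_apply, Equiv.Perm.mul_apply, ih, h]

lemma T_pow_cons2_eq (k : ℕ) (a : ℤ) (ha : a = -1 ∨ a = 0) (N : ℕ)
    (t : {l : List ℤ // l.length = k}) :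
    ((T (k+2)) ^ (2 * N)) (gtCons2 a a t) = gtCons2 a a (((S k) ^ N) t) := by
  rw [pow_mul]
  exact pow_gtCons2 _ _ a a (Tsq_eq k a ha) N t

lemma T_pow_cons2_ne (k : ℕ) (a b : ℤ) (hab : (a = 0 ∧ b = -1) ∨ (a = -1 ∧ b = 0)) (N : ℕ)
    (t : {l : List ℤ // l.length = k}) :
    ((T (k+2)) ^ (2 * N)) (gtCons2 a b t) = gtCons2 a b (((T k) ^ N) t) := by
  rw [pow_mul]
  exact pow_gtCons2 _ _ a b (Tsq_ne k a b hab) N t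

lemma lemA : ∀ (j : ℕ) (t : {l : List ℤ // l.length = 2*j+1}),
    (∀ x ∈ t.1, x = -1 ∨ x = 0) → ((T (2*j+1)) ^ (2 ^ (j+1))) t = t := by
  intro j
  induction j with
  | zero =>
    intro t _
    obtain ⟨a, t0, rfl⟩ := exists_cons (k := 0) t
    show ((T (0+1)) ^ (2:ℕ)) (gtCons a t0) = gtCons a t0
    rw [pow_two, Equiv.Perm.mul_apply, T_len1, T_len1]
    congr 1
    ring
  | succ j ih =>
    intro t hm
    obtain ⟨a, b, t', rfl⟩ := exists_cons2 (k := 2*j+1) t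
    have ha : a = -1 ∨ a = 0 := hm a (by simp [gtCons2, gtCons])
    have hb : b = -1 ∨ b = 0 := hm b (by simp [gtCons2, gtCons])
    have hm' : ∀ x ∈ t'.1, x = -1 ∨ x = 0 := fun x hx => hm x (by simp [gtCons2, gtCons, hx])
    have h2 : (2:ℕ) ^ (j+1+1) = 2 * 2 ^ (j+1) := pow_succ' 2 (j+1)
    show ((T ((2*j+1)+2)) ^ (2 ^ (j+1+1))) (gtCons2 a b t') = gtCons2 a b t'
    rw [h2]
    rcases ha with rfl|rfl <;> rcases hb with rfl|rfl
    · rw [T_pow_cons2_eq (2*j+1) _ (Or.inl rfl), S_pow_two_pow (2*j) j]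
      simp
    · rw [T_pow_cons2_ne (2*j+1) _ _ (Or.inr ⟨rfl, rfl⟩), ih t' hm']
    · rw [T_pow_cons2_ne (2*j+1) _ _ (Or.inl ⟨rfl, rfl⟩), ih t' hm']
    · rw [T_pow_cons2_eq (2*j+1) _ (Or.inr rfl), S_pow_two_pow (2*j) j]
      simp

lemma len_flat (i : ℕ) (a b : ℤ) : ((List.replicate i [a, b]).flatten).length = 2 * i := by
  induction i with
  | zero => simp
  | succ i ih => simp only [List.replicate_succ, List.flatten_cons, List.length_append, ih,
      List.length_cons, List.length_nil]; omega

lemma lemB1 : ∀ (i : ℕ) (t r : {l : List ℤ // l.length = 2*i+1}),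
    t.1 = -1 :: (List.replicate i [(0:ℤ), -1]).flatten →
    r.1 = (List.replicate i [(-1:ℤ), 0]).flatten ++ [0] →
    ((T (2*i+1)) ^ (2 ^ i)) t = r := by
  intro i
  induction i with
  | zero =>
    intro t r ht hr
    have ht' : t = gtCons (-1) ⟨[], rfl⟩ := Subtype.ext (by simpa [gtCons] using ht)
    rw [ht']
    show ((T (0+1)) ^ (2:ℕ) ^ 0) (gtCons (-1) ⟨[], rfl⟩) = r
    rw [pow_zero, pow_one, T_len1]
    refine Subtype.ext ?_
    simp [gtCons, hr]
  | succ i ih =>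
    intro t r ht hr
    set t' : {l : List ℤ // l.length = 2*i+1} :=
      ⟨-1 :: (List.replicate i [(0:ℤ), -1]).flatten, by simp [len_flat]; try omega⟩ with ht'def
    set r' : {l : List ℤ // l.length = 2*i+1} :=
      ⟨(List.replicate i [(-1:ℤ), 0]).flatten ++ [0], by simp [len_flat]; try omega⟩ with hr'def
    have htt : t = gtCons2 (-1) 0 t' := Subtype.ext (by
      simp [ht, gtCons2, gtCons, List.replicate_succ, ht'def])
    rw [htt]
    show ((T ((2*i+1)+2)) ^ (2 ^ (i+1))) (gtCons2 (-1) 0 t') = r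
    rw [pow_succ' 2 i, T_pow_cons2_ne (2*i+1) _ _ (Or.inr ⟨rfl, rfl⟩),
      ih t' r' rfl rfl]
    refine Subtype.ext ?_
    simp [hr, gtCons2, gtCons, List.replicate_succ, hr'def]

lemma lemB2 : ∀ (i : ℕ) (t r : {l : List ℤ // l.length = 2*i+1}),
    t.1 = (List.replicate i [(0:ℤ), -1]).flatten ++ [0] →
    r.1 = (List.replicate i [(0:ℤ), -1]).flatten ++ [-1] →
    ((T (2*i+1)) ^ (2 ^ i)) t = r := by
  intro i
  induction i with
  | zero =>
    intro t r ht hr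
    have ht' : t = gtCons 0 ⟨[], rfl⟩ := Subtype.ext (by simpa [gtCons] using ht)
    rw [ht']
    show ((T (0+1)) ^ (2:ℕ) ^ 0) (gtCons 0 ⟨[], rfl⟩) = r
    rw [pow_zero, pow_one, T_len1]
    refine Subtype.ext ?_
    simp [gtCons, hr]
  | succ i ih =>
    intro t r ht hr
    set t' : {l : List ℤ // l.length = 2*i+1} :=
      ⟨(List.replicate i [(0:ℤ), -1]).flatten ++ [0], by simp [len_flat]; try omega⟩ with ht'def
    set r' : {l : List ℤ // l.length = 2*i+1} :=
      ⟨(List.replicate i [(0:ℤ), -1]).flatten ++ [-1], by simp [len_flat]; try omega⟩ with hr'def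
    have htt : t = gtCons2 0 (-1) t' := Subtype.ext (by
      simp [ht, gtCons2, gtCons, List.replicate_succ, ht'def])
    rw [htt]
    show ((T ((2*i+1)+2)) ^ (2 ^ (i+1))) (gtCons2 0 (-1) t') = r
    rw [pow_succ' 2 i, T_pow_cons2_ne (2*i+1) _ _ (Or.inl ⟨rfl, rfl⟩),
      ih t' r' rfl rfl]
    refine Subtype.ext ?_
    simp [hr, gtCons2, gtCons, List.replicate_succ, hr'def]

lemma ne1 : ∀ i : ℕ, (-1 : ℤ) :: (List.replicate i [(0:ℤ), -1]).flatten ≠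
    (List.replicate i [(-1:ℤ), 0]).flatten ++ [0] := by
  intro i
  induction i with
  | zero => simp
  | succ i ih =>
    intro h
    apply ih
    simpa [List.replicate_succ] using h

lemma ne2 (i : ℕ) : (List.replicate i [(0:ℤ), -1]).flatten ++ [0] ≠
    (List.replicate i [(0:ℤ), -1]).flatten ++ [-1] := by
  intro h
  have := List.append_cancel_left h
  simp at this

lemma iterate_gtorsion (m n x : ℤ) : ∀ (N : ℕ) (k : ℕ) (l : List ℤ) (h : l.length = k),
    (gtorsion m n x)^[N] l = ((gtPerm m n k x ^ N) ⟨l, h⟩).1 := by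
  intro N
  induction N with
  | zero => intro k l h; simp
  | succ N ih =>
    intro k l h
    subst h
    rw [Function.iterate_succ_apply]
    have hlen : (gtorsion m n x l).length = l.length := (gtPerm m n l.length x ⟨l, rfl⟩).2
    rw [ih l.length (gtorsion m n x l) hlen]
    have he : (⟨gtorsion m n x l, hlen⟩ : {l' : List ℤ // l'.length = l.length}) =
        gtPerm m n l.length x ⟨l, rfl⟩ := Subtype.ext rfl
    rw [he, ← Equiv.Perm.mul_apply, ← pow_succ]

lemma mem_flat (i : ℕ) (x : ℤ) (hx : x ∈ (List.replicate i [(0:ℤ), -1]).flatten) :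
    x = -1 ∨ x = 0 := by
  simp only [List.mem_flatten, List.mem_replicate] at hx
  obtain ⟨l, ⟨-, rfl⟩, hxl⟩ := hx
  simp at hxl
  tauto

lemma minper (f : List ℤ → List ℤ) (t : List ℤ) (i : ℕ)
    (h1 : Function.IsPeriodicPt f (2 ^ (i+1)) t)
    (h2 : ¬ Function.IsPeriodicPt f (2 ^ i) t) :
    Function.minimalPeriod f t = 2 ^ (i+1) := by
  obtain ⟨m, hm, hmp⟩ := (Nat.dvd_prime_pow Nat.prime_two).1 h1.minimalPeriod_dvd
  have hmi : m = i + 1 := by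
    by_contra hne
    have : Function.minimalPeriod f t ∣ 2 ^ i := hmp ▸ pow_dvd_pow 2 (by omega)
    obtain ⟨c, hc⟩ := this
    exact h2 (hc ▸ (Function.isPeriodicPt_minimalPeriod f t).mul_const c)
  rw [hmp, hmi]

/-- For `j > 0` and `v = (0, -1)`, the orbits of `(-1) v^{j-1}` and of `v^{j-1} (0)`
under the generalized torsion map `t ↦ C_{-1,0}(-1, t)` on `{-1, 0}^{2j-1}` have length
exactly `2^j`. -/
theorem gtorsion_orbit_neg (j : ℕ) (hj : 0 < j) :
    Function.minimalPeriod (gtorsion (-1) 0 (-1))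
      ((-1 : ℤ) :: (List.replicate (j - 1) [(0 : ℤ), -1]).flatten) = 2 ^ j ∧
    Function.minimalPeriod (gtorsion (-1) 0 (-1))
      ((List.replicate (j - 1) [(0 : ℤ), -1]).flatten ++ [(0 : ℤ)]) = 2 ^ j := by
  obtain ⟨i, rfl⟩ : ∃ i, j = i + 1 := ⟨j - 1, (Nat.succ_pred_eq_of_pos hj).symm⟩
  simp only [Nat.add_sub_cancel]
  set F := List.flatten (List.replicate i [(0:ℤ), -1]) with hF
  have hlen1 : ((-1:ℤ) :: F).length = 2 * i + 1 := by simp [hF, len_flat]; try omega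
  have hlen2 : (F ++ [(0:ℤ)]).length = 2 * i + 1 := by simp [hF, len_flat]; omega
  have hlenr1 : ((List.replicate i [(-1:ℤ), 0]).flatten ++ [0]).length = 2 * i + 1 := by
    simp [len_flat]; omega
  have hlenr2 : (F ++ [(-1:ℤ)]).length = 2 * i + 1 := by simp [hF, len_flat]; omega
  constructor
  · apply minper
    · show (gtorsion (-1) 0 (-1))^[2 ^ (i+1)] _ = _
      rw [iterate_gtorsion (-1) 0 (-1) (2^(i+1)) (2*i+1) _ hlen1,
        lemA i ⟨_, hlen1⟩ (by
          intro x hx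
          rcases List.mem_cons.1 hx with rfl | hx
          · left; rfl
          · exact mem_flat i x hx)]
    · intro h
      have h' : (gtorsion (-1) 0 (-1))^[2 ^ i] ((-1:ℤ) :: F) = (-1:ℤ) :: F := h
      rw [iterate_gtorsion (-1) 0 (-1) (2^i) (2*i+1) _ hlen1,
        lemB1 i ⟨_, hlen1⟩ ⟨_, hlenr1⟩ rfl rfl] at h'
      exact ne1 i h'.symm
  · apply minper
    · show (gtorsion (-1) 0 (-1))^[2 ^ (i+1)] _ = _
      rw [iterate_gtorsion (-1) 0 (-1) (2^(i+1)) (2*i+1) _ hlen2,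
        lemA i ⟨_, hlen2⟩ (by
          intro x hx
          rcases List.mem_append.1 hx with hx | hx
          · exact mem_flat i x hx
          · right; simpa using hx)]
    · intro h
      have h' : (gtorsion (-1) 0 (-1))^[2 ^ i] (F ++ [(0:ℤ)]) = F ++ [(0:ℤ)] := h
      rw [iterate_gtorsion (-1) 0 (-1) (2^i) (2*i+1) _ hlen2,
        lemB2 i ⟨_, hlen2⟩ ⟨_, hlenr2⟩ rfl rfl] at h'
      exact ne2 i h'.symm
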